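/- Let φ = (φ_1,…,φ_n) : 𝔻ⁿ → 𝔻ⁿ be holomorphic and suppose C_φ is an isometry on the Bloch space of 𝔻ⁿ. Then: (a) the component functions φ_1,…,φ_n are linearly independent over ℂ; (b) φ(0) = 0; (c) each component φ_j has Bloch seminorm β_{φ_j} = 1. -/

import Mathlib

open Complex Metric Set

/-- The unit polydisk `𝔻ⁿ = { z ∈ ℂⁿ : |z_k| < 1 for all k }`. -/
def polydisk (n : ℕ) : Set (Fin n → ℂ) := {z | ∀ k, ‖z k‖ < 1}

/-- The Bergman metric on the polydisk: `H_z(u,ū) = Σ_k |u_k|²/(1−|z_k|²)²`. -/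
noncomputable def polyH (n : ℕ) (z u : Fin n → ℂ) : ℝ :=
  ∑ k, ‖u k‖ ^ 2 / (1 - ‖z k‖ ^ 2) ^ 2

/-- `Q_f(z) = sup_{u ≠ 0} |f'(z)u| / H_z(u,ū)^{1/2}` on the polydisk. -/
noncomputable def Qpoly (n : ℕ) (f : (Fin n → ℂ) → ℂ) (z : Fin n → ℂ) : ℝ :=
  sSup {r : ℝ | ∃ u : Fin n → ℂ, u ≠ 0 ∧
    r = ‖fderiv ℂ f z u‖ / Real.sqrt (polyH n z u)}

/-- The set of values `Q_f(z)` for `z ∈ 𝔻ⁿ`. -/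
def blochValuesPoly (n : ℕ) (f : (Fin n → ℂ) → ℂ) : Set ℝ :=
  {r : ℝ | ∃ z ∈ polydisk n, r = Qpoly n f z}

/-- The Bloch seminorm `β_f = sup_{z ∈ 𝔻ⁿ} Q_f(z)`. -/
noncomputable def blochSemiPoly (n : ℕ) (f : (Fin n → ℂ) → ℂ) : ℝ :=
  sSup (blochValuesPoly n f)

/-- `f` is a Bloch function on the polydisk. -/
def IsBlochPoly (n : ℕ) (f : (Fin n → ℂ) → ℂ) : Prop :=
  DifferentiableOn ℂ f (polydisk n) ∧ BddAbove (blochValuesPoly n f)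

/-- The Bloch norm `‖f‖_B = |f(0)| + β_f` on the polydisk. -/
noncomputable def blochNormPoly (n : ℕ) (f : (Fin n → ℂ) → ℂ) : ℝ :=
  ‖f 0‖ + blochSemiPoly n f

noncomputable def mob (a w : ℂ) : ℂ := (a - w) / (1 - (starRingEnd ℂ) a * w)

lemma mob_denom_ne {a w : ℂ} (ha : ‖a‖ < 1) (hw : ‖w‖ < 1) :
    1 - (starRingEnd ℂ) a * w ≠ 0 := by
  intro h
  have h0 : (1 : ℂ) = (starRingEnd ℂ) a * w := by linear_combination h
  have h1 : ‖(starRingEnd ℂ) a * w‖ < 1 := by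
    rw [norm_mul, RCLike.norm_conj]
    nlinarith [norm_nonneg a, norm_nonneg w]
  rw [← h0] at h1
  simp at h1

lemma mob_identity (a w : ℂ) :
    ‖1 - (starRingEnd ℂ) a * w‖ ^ 2 - ‖a - w‖ ^ 2 = (1 - ‖a‖ ^ 2) * (1 - ‖w‖ ^ 2) := by
  simp only [Complex.sq_norm, normSq_apply, sub_re, sub_im, mul_re, mul_im,
    one_re, one_im, conj_re, conj_im]
  ring

lemma mob_norm_lt {a w : ℂ} (ha : ‖a‖ < 1) (hw : ‖w‖ < 1) : ‖mob a w‖ < 1 := by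
  have hd := mob_denom_ne ha hw
  have hdn : 0 < ‖1 - (starRingEnd ℂ) a * w‖ := norm_pos_iff.2 hd
  have hid := mob_identity a w
  rw [mob, norm_div, div_lt_one hdn]
  have hp : (0:ℝ) < (1 - ‖a‖ ^ 2) * (1 - ‖w‖ ^ 2) := by
    apply mul_pos <;> nlinarith [norm_nonneg a, norm_nonneg w]
  have hsq : ‖a - w‖ ^ 2 < ‖1 - (starRingEnd ℂ) a * w‖ ^ 2 := by nlinarith
  exact lt_of_pow_lt_pow_left₀ 2 hdn.le hsq

lemma mob_hasDerivAt (a : ℂ) {w : ℂ} (hd : 1 - (starRingEnd ℂ) a * w ≠ 0) :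
    HasDerivAt (mob a) (((starRingEnd ℂ) a * a - 1) / (1 - (starRingEnd ℂ) a * w) ^ 2) w := by
  have h1 : HasDerivAt (fun w : ℂ => a - w) (-1) w := by
    simpa using (hasDerivAt_id w).const_sub a
  have h2 : HasDerivAt (fun w : ℂ => 1 - (starRingEnd ℂ) a * w) (-(starRingEnd ℂ) a) w := by
    simpa using ((hasDerivAt_id w).const_mul ((starRingEnd ℂ) a)).const_sub 1
  have h3 := h1.div h2 hd
  convert h3 using 1
  all_goals try rfl
  field_simp
  ring

lemma one_sub_conj_mul_self (a : ℂ) :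
    1 - (starRingEnd ℂ) a * a = ((1 - ‖a‖ ^ 2 : ℝ) : ℂ) := by
  rw [← normSq_eq_conj_mul_self, normSq_eq_norm_sq]
  push_cast
  ring

lemma norm_one_sub_conj_mul_self {a : ℂ} (ha : ‖a‖ < 1) :
    ‖1 - (starRingEnd ℂ) a * a‖ = 1 - ‖a‖ ^ 2 := by
  rw [one_sub_conj_mul_self, Complex.norm_real, Real.norm_eq_abs, _root_.abs_of_nonneg]
  nlinarith [norm_nonneg a]

lemma mob_self (a : ℂ) : mob a a = 0 := by simp [mob]

lemma mob_zero (a : ℂ) : mob a 0 = a := by simp [mob]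

lemma schwarz_pick_zero {F : ℂ → ℂ} (hd : DifferentiableOn ℂ F (ball 0 1))
    (hm : MapsTo F (ball 0 1) (ball 0 1)) :
    ‖deriv F 0‖ ≤ 1 - ‖F 0‖ ^ 2 := by
  have h0 : (0 : ℂ) ∈ ball (0 : ℂ) 1 := mem_ball_self one_pos
  have ha1 : ‖F 0‖ < 1 := by simpa [mem_ball_zero_iff] using hm h0
  set a := F 0 with ha
  set G := fun ζ => mob a (F ζ) with hG
  have hGd : DifferentiableOn ℂ G (ball 0 1) := by
    intro ζ hζ
    have hF1 : ‖F ζ‖ < 1 := by simpa [mem_ball_zero_iff] using hm hζ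
    exact ((mob_hasDerivAt a (mob_denom_ne ha1 hF1)).differentiableAt.comp ζ
      ((hd ζ hζ).differentiableAt (isOpen_ball.mem_nhds hζ))).differentiableWithinAt
  have hG0 : G 0 = 0 := by simp [hG, ← ha, mob_self]
  have hGm : MapsTo G (ball 0 1) (ball (G 0) 1) := by
    rw [hG0]
    intro ζ hζ
    have hF1 : ‖F ζ‖ < 1 := by simpa [mem_ball_zero_iff] using hm hζ
    simpa [mem_ball_zero_iff] using mob_norm_lt ha1 hF1
  have hb := norm_deriv_le_div_of_mapsTo_ball hGd (hGm.mono_right ball_subset_closedBall) one_pos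
  have hFd : DifferentiableAt ℂ F 0 := (hd 0 h0).differentiableAt (isOpen_ball.mem_nhds h0)
  have hder : HasDerivAt G
      ((((starRingEnd ℂ) a * a - 1) / (1 - (starRingEnd ℂ) a * a) ^ 2) * deriv F 0) 0 := by
    exact (mob_hasDerivAt a (mob_denom_ne ha1 ha1)).comp 0 hFd.hasDerivAt
  have hda : 0 < 1 - ‖a‖ ^ 2 := by nlinarith [norm_nonneg a]
  have hnum : ‖(starRingEnd ℂ) a * a - 1‖ = 1 - ‖a‖ ^ 2 := by
    rw [← norm_neg, neg_sub, norm_one_sub_conj_mul_self ha1]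
  have hden : ‖(1 - (starRingEnd ℂ) a * a) ^ 2‖ = (1 - ‖a‖ ^ 2) ^ 2 := by
    rw [norm_pow, norm_one_sub_conj_mul_self ha1]
  have hGnorm : ‖deriv G 0‖ = (1 - ‖a‖ ^ 2)⁻¹ * ‖deriv F 0‖ := by
    rw [hder.deriv, norm_mul, norm_div, hnum, hden]
    congr 1
    rw [pow_two (1 - ‖a‖ ^ 2), div_mul_cancel_left₀ hda.ne']
  rw [hGnorm] at hb
  calc ‖deriv F 0‖ = (1 - ‖a‖ ^ 2) * ((1 - ‖a‖ ^ 2)⁻¹ * ‖deriv F 0‖) := by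
        rw [← mul_assoc, mul_inv_cancel₀ hda.ne', one_mul]
    _ ≤ (1 - ‖a‖ ^ 2) * 1 := mul_le_mul_of_nonneg_left (by simpa using hb) hda.le
    _ = 1 - ‖a‖ ^ 2 := mul_one _

lemma polydisk_open (n : ℕ) : IsOpen (polydisk n) := by
  have h : polydisk n = Set.pi univ (fun _ : Fin n => ball (0 : ℂ) 1) := by
    ext z
    simp [polydisk, Set.mem_pi, mem_ball_zero_iff]
  rw [h]
  exact isOpen_set_pi finite_univ fun _ _ => isOpen_ball

lemma zero_mem_polydisk (n : ℕ) : (0 : Fin n → ℂ) ∈ polydisk n := by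
  intro k; simp [polydisk]

lemma one_sub_sq_pos {n : ℕ} {z : Fin n → ℂ} (hz : z ∈ polydisk n) (k : Fin n) :
    0 < 1 - ‖z k‖ ^ 2 := by
  have := hz k
  nlinarith [norm_nonneg (z k)]

lemma polyH_nonneg (n : ℕ) (z u : Fin n → ℂ) : 0 ≤ polyH n z u := by
  apply Finset.sum_nonneg
  intro k _
  positivity

lemma polyH_pos {n : ℕ} {z u : Fin n → ℂ} (hz : z ∈ polydisk n) (hu : u ≠ 0) :
    0 < polyH n z u := by
  obtain ⟨k, hk⟩ := Function.ne_iff.1 hu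
  apply Finset.sum_pos' (fun k _ => by positivity) ⟨k, Finset.mem_univ k, ?_⟩
  have h1 := one_sub_sq_pos hz k
  have h2 : 0 < ‖u k‖ := norm_pos_iff.2 hk
  positivity

lemma sqrt_polyH_pos {n : ℕ} {z u : Fin n → ℂ} (hz : z ∈ polydisk n) (hu : u ≠ 0) :
    0 < Real.sqrt (polyH n z u) := Real.sqrt_pos.2 (polyH_pos hz hu)

/-- single-coordinate bound: `‖u k‖ ≤ (1 - ‖z k‖²) √(H_z(u))`. -/
lemma norm_coord_le {n : ℕ} {z : Fin n → ℂ} (hz : z ∈ polydisk n) (u : Fin n → ℂ) (k : Fin n) :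
    ‖u k‖ ≤ (1 - ‖z k‖ ^ 2) * Real.sqrt (polyH n z u) := by
  have h1 := one_sub_sq_pos hz k
  have ht : ‖u k‖ ^ 2 / (1 - ‖z k‖ ^ 2) ^ 2 ≤ polyH n z u :=
    Finset.single_le_sum (f := fun k => ‖u k‖ ^ 2 / (1 - ‖z k‖ ^ 2) ^ 2)
      (fun k _ => by positivity) (Finset.mem_univ k)
  have h2 : (‖u k‖ / (1 - ‖z k‖ ^ 2)) ^ 2 ≤ polyH n z u := by
    rw [div_pow]; exact ht
  have h3 : ‖u k‖ / (1 - ‖z k‖ ^ 2) ≤ Real.sqrt (polyH n z u) := by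
    have := Real.sqrt_le_sqrt h2
    rwa [Real.sqrt_sq (by positivity)] at this
  calc ‖u k‖ = (1 - ‖z k‖ ^ 2) * (‖u k‖ / (1 - ‖z k‖ ^ 2)) := by
        rw [mul_div_assoc', mul_comm, mul_div_assoc, div_self h1.ne', mul_one]
    _ ≤ (1 - ‖z k‖ ^ 2) * Real.sqrt (polyH n z u) :=
        mul_le_mul_of_nonneg_left h3 h1.le
    _ = (1 - ‖z k‖ ^ 2) * Real.sqrt (polyH n z u) := rfl

lemma Qpoly_le_of_bound {n : ℕ} {f : (Fin n → ℂ) → ℂ} {z : Fin n → ℂ} {M : ℝ}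
    (hz : z ∈ polydisk n) (hM : 0 ≤ M)
    (hub : ∀ u : Fin n → ℂ, u ≠ 0 → ‖fderiv ℂ f z u‖ ≤ M * Real.sqrt (polyH n z u)) :
    Qpoly n f z ≤ M := by
  apply Real.sSup_le _ hM
  rintro r ⟨u, hu, rfl⟩
  rw [div_le_iff₀ (sqrt_polyH_pos hz hu)]
  calc ‖fderiv ℂ f z u‖ ≤ M * Real.sqrt (polyH n z u) := hub u hu
    _ = M * Real.sqrt (polyH n z u) := rfl

lemma Qpoly_bddAbove_of_bound {n : ℕ} {f : (Fin n → ℂ) → ℂ} {z : Fin n → ℂ} {M : ℝ}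
    (hz : z ∈ polydisk n)
    (hub : ∀ u : Fin n → ℂ, u ≠ 0 → ‖fderiv ℂ f z u‖ ≤ M * Real.sqrt (polyH n z u)) :
    BddAbove {r : ℝ | ∃ u : Fin n → ℂ, u ≠ 0 ∧
      r = ‖fderiv ℂ f z u‖ / Real.sqrt (polyH n z u)} := by
  refine ⟨M, ?_⟩
  rintro r ⟨u, hu, rfl⟩
  rw [div_le_iff₀ (sqrt_polyH_pos hz hu)]
  exact hub u hu

lemma Qpoly_eq_of_bound {n : ℕ} {f : (Fin n → ℂ) → ℂ} {z : Fin n → ℂ} {M : ℝ}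
    (hz : z ∈ polydisk n) (hM : 0 ≤ M)
    (hub : ∀ u : Fin n → ℂ, u ≠ 0 → ‖fderiv ℂ f z u‖ ≤ M * Real.sqrt (polyH n z u))
    (hex : ∃ u : Fin n → ℂ, u ≠ 0 ∧ ‖fderiv ℂ f z u‖ = M * Real.sqrt (polyH n z u)) :
    Qpoly n f z = M := by
  refine le_antisymm (Qpoly_le_of_bound hz hM hub) ?_
  obtain ⟨u, hu, heq⟩ := hex
  have hmem : M ∈ {r : ℝ | ∃ u : Fin n → ℂ, u ≠ 0 ∧
      r = ‖fderiv ℂ f z u‖ / Real.sqrt (polyH n z u)} := by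
    refine ⟨u, hu, ?_⟩
    rw [heq, mul_div_cancel_right₀ _ (sqrt_polyH_pos hz hu).ne']
  exact le_csSup (Qpoly_bddAbove_of_bound hz hub) hmem

lemma blochSemi_le_of_bound {n : ℕ} {f : (Fin n → ℂ) → ℂ} {M : ℝ} (hM : 0 ≤ M)
    (h : ∀ z ∈ polydisk n, Qpoly n f z ≤ M) : blochSemiPoly n f ≤ M := by
  apply Real.sSup_le _ hM
  rintro r ⟨z, hz, rfl⟩
  exact h z hz

lemma blochValues_bddAbove_of_bound {n : ℕ} {f : (Fin n → ℂ) → ℂ} {M : ℝ}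
    (h : ∀ z ∈ polydisk n, Qpoly n f z ≤ M) : BddAbove (blochValuesPoly n f) := by
  refine ⟨M, ?_⟩
  rintro r ⟨z, hz, rfl⟩
  exact h z hz

lemma blochSemi_eq_of_bound {n : ℕ} {f : (Fin n → ℂ) → ℂ} {M : ℝ} (hM : 0 ≤ M)
    (h : ∀ z ∈ polydisk n, Qpoly n f z ≤ M)
    (hex : ∃ z ∈ polydisk n, Qpoly n f z = M) : blochSemiPoly n f = M := by
  refine le_antisymm (blochSemi_le_of_bound hM h) ?_
  obtain ⟨z, hz, heq⟩ := hex
  exact le_csSup (blochValues_bddAbove_of_bound h) ⟨z, hz, heq.symm⟩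

lemma schwarz_pick_polydisk {n : ℕ} {h : (Fin n → ℂ) → ℂ} {z u : Fin n → ℂ}
    (hd : DifferentiableOn ℂ h (polydisk n)) (hm : ∀ w ∈ polydisk n, ‖h w‖ < 1)
    (hz : z ∈ polydisk n) (hu : u ≠ 0) :
    ‖fderiv ℂ h z u‖ ≤ (1 - ‖h z‖ ^ 2) * Real.sqrt (polyH n z u) := by
  set K := Real.sqrt (polyH n z u) with hK
  have hKpos : 0 < K := sqrt_polyH_pos hz hu
  set b : Fin n → ℂ := fun k => u k / ((K : ℂ) * (1 - (starRingEnd ℂ) (z k) * z k)) with hb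
  have hdnorm : ∀ k, ‖1 - (starRingEnd ℂ) (z k) * z k‖ = 1 - ‖z k‖ ^ 2 :=
    fun k => norm_one_sub_conj_mul_self (hz k)
  have hdne : ∀ k, (1 - (starRingEnd ℂ) (z k) * z k) ≠ 0 := fun k => by
    intro hcon
    have := hdnorm k
    rw [hcon, norm_zero] at this
    exact absurd this.symm (one_sub_sq_pos hz k).ne'
  have hble : ∀ k, ‖b k‖ ≤ 1 := by
    intro k
    rw [hb]
    simp only [norm_div, norm_mul, Complex.norm_real, Real.norm_eq_abs,
      _root_.abs_of_nonneg hKpos.le, hdnorm k]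
    have h1 := one_sub_sq_pos hz k
    rw [div_le_one (by positivity)]
    have := norm_coord_le hz u k
    rw [← hK] at this
    linarith [this]
  -- the analytic disk γ
  set γ : ℂ → Fin n → ℂ := fun ζ k => mob (z k) (-(b k * ζ)) with hγ
  have hγmem : ∀ ζ ∈ ball (0 : ℂ) 1, γ ζ ∈ polydisk n := by
    intro ζ hζ k
    apply mob_norm_lt (hz k)
    rw [norm_neg, norm_mul]
    calc ‖b k‖ * ‖ζ‖ ≤ 1 * ‖ζ‖ := mul_le_mul_of_nonneg_right (hble k) (norm_nonneg ζ)
      _ = ‖ζ‖ := one_mul _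
      _ < 1 := by rwa [← mem_ball_zero_iff]
  have hγ0 : γ 0 = z := by
    funext k
    simp [hγ, mob]
  have hγdiff : ∀ ζ ∈ ball (0 : ℂ) 1, ∀ k,
      HasDerivAt (fun ζ => γ ζ k)
        ((((starRingEnd ℂ) (z k) * z k - 1) / (1 - (starRingEnd ℂ) (z k) * (-(b k * ζ))) ^ 2)
          * (-(b k))) ζ := by
    intro ζ hζ k
    have hwlt : ‖-(b k * ζ)‖ < 1 := by
      rw [norm_neg, norm_mul]
      calc ‖b k‖ * ‖ζ‖ ≤ 1 * ‖ζ‖ := mul_le_mul_of_nonneg_right (hble k) (norm_nonneg ζ)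
        _ = ‖ζ‖ := one_mul _
        _ < 1 := by rwa [← mem_ball_zero_iff]
    have hinner : HasDerivAt (fun ζ : ℂ => -(b k * ζ)) (-(b k)) ζ := by
      convert ((hasDerivAt_id ζ).const_mul (b k)).neg using 1 <;> first | rfl | simp
    exact (mob_hasDerivAt (z k) (mob_denom_ne (hz k) hwlt)).comp ζ hinner
  have h0mem : (0 : ℂ) ∈ ball (0 : ℂ) 1 := mem_ball_self one_pos
  have hγd0 : HasDerivAt γ (fun k => u k / (K : ℂ)) 0 := by
    rw [hasDerivAt_pi]
    intro k
    have := hγdiff 0 h0mem k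
    convert this using 1
    all_goals try rfl
    have hKne : ((K : ℝ) : ℂ) ≠ 0 := Complex.ofReal_ne_zero.mpr hKpos.ne'
    rw [hb]
    simp only [mul_zero, neg_zero, mul_zero, sub_zero, one_pow, div_one]
    field_simp [hdne k]
    ring
  -- define F and apply 1D Schwarz-Pick
  set F : ℂ → ℂ := fun ζ => h (γ ζ) with hF
  have hhz : DifferentiableAt ℂ h z :=
    (hd z hz).differentiableAt ((polydisk_open n).mem_nhds hz)
  have hFd : DifferentiableOn ℂ F (ball 0 1) := by
    intro ζ hζ
    have hγζ : DifferentiableAt ℂ γ ζ :=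
      differentiableAt_pi.2 fun k => (hγdiff ζ hζ k).differentiableAt
    exact (((hd (γ ζ) (hγmem ζ hζ)).differentiableAt
      ((polydisk_open n).mem_nhds (hγmem ζ hζ))).comp ζ hγζ).differentiableWithinAt
  have hFm : MapsTo F (ball 0 1) (ball 0 1) := by
    intro ζ hζ
    rw [mem_ball_zero_iff]
    exact hm (γ ζ) (hγmem ζ hζ)
  have hFder : HasDerivAt F (fderiv ℂ h z fun k => u k / (K : ℂ)) 0 := by
    have h1 : HasFDerivAt h (fderiv ℂ h z) (γ 0) := by rw [hγ0]; exact hhz.hasFDerivAt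
    exact h1.comp_hasDerivAt 0 hγd0
  have hsp := schwarz_pick_zero hFd hFm
  have hF0 : F 0 = h z := by rw [hF]; simp [hγ0]
  rw [hFder.deriv, hF0] at hsp
  have hsmul : (fun k => u k / (K : ℂ)) = ((K : ℂ)⁻¹ : ℂ) • u := by
    funext k
    simp [div_eq_inv_mul]
  rw [hsmul, map_smul, norm_smul] at hsp
  have hKinv : ‖((K : ℂ)⁻¹ : ℂ)‖ = K⁻¹ := by
    rw [norm_inv, Complex.norm_real, Real.norm_eq_abs, _root_.abs_of_nonneg hKpos.le]
  rw [hKinv] at hsp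
  calc ‖fderiv ℂ h z u‖ = K * (K⁻¹ * ‖fderiv ℂ h z u‖) := by
        rw [← mul_assoc, mul_inv_cancel₀ hKpos.ne', one_mul]
    _ ≤ K * (1 - ‖h z‖ ^ 2) := mul_le_mul_of_nonneg_left hsp hKpos.le
    _ = (1 - ‖h z‖ ^ 2) * K := mul_comm _ _

lemma Qpoly_eq_proj_like {n : ℕ} {f : (Fin n → ℂ) → ℂ} {z : Fin n → ℂ} {s : ℂ} {j : Fin n}
    (hz : z ∈ polydisk n) (hf : ∀ u : Fin n → ℂ, fderiv ℂ f z u = s * u j) :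
    Qpoly n f z = ‖s‖ * (1 - ‖z j‖ ^ 2) := by
  have h1 := one_sub_sq_pos hz j
  apply Qpoly_eq_of_bound hz (by positivity)
  · intro u hu
    rw [hf u, norm_mul]
    calc ‖s‖ * ‖u j‖ ≤ ‖s‖ * ((1 - ‖z j‖ ^ 2) * Real.sqrt (polyH n z u)) :=
          mul_le_mul_of_nonneg_left (norm_coord_le hz u j) (norm_nonneg s)
      _ = ‖s‖ * (1 - ‖z j‖ ^ 2) * Real.sqrt (polyH n z u) := by ring
  · refine ⟨Pi.single j 1, ?_, ?_⟩
    · intro hcon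
      have := congrFun hcon j
      simp [Pi.single_eq_same] at this
    · have hH : polyH n z (Pi.single j 1) = ((1 - ‖z j‖ ^ 2)⁻¹) ^ 2 := by
        rw [polyH, Finset.sum_eq_single j]
        · simp [Pi.single_eq_same, div_pow, inv_pow, one_div]
        · intro k _ hk
          simp [Pi.single_eq_of_ne hk]
        · intro hj
          exact absurd (Finset.mem_univ j) hj
      rw [hf, hH, Real.sqrt_sq (by positivity), norm_mul]
      simp only [Pi.single_eq_same, norm_one, mul_one]
      rw [mul_assoc, mul_inv_cancel₀ h1.ne', mul_one]

lemma hasFDerivAt_proj {n : ℕ} (j : Fin n) (z : Fin n → ℂ) :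
    HasFDerivAt (fun w : Fin n → ℂ => w j)
      (ContinuousLinearMap.proj j : ((k : Fin n) → ℂ) →L[ℂ] ℂ) z :=
  (ContinuousLinearMap.proj j : ((k : Fin n) → ℂ) →L[ℂ] ℂ).hasFDerivAt


set_option maxHeartbeats 2000000 in
/-- Necessary conditions for `C_φ` to be an isometry on the Bloch space of the
polydisk: the components of `φ` are linearly independent over `ℂ`, `φ(0) = 0`,
and each component has Bloch seminorm `1`. -/
theorem necessary_conditions_isometry_polydisk (n : ℕ)
    (φ : (Fin n → ℂ) → Fin n → ℂ)
    (hmap : MapsTo φ (polydisk n) (polydisk n))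
    (hφ : DifferentiableOn ℂ φ (polydisk n))
    (hiso : ∀ f : (Fin n → ℂ) → ℂ, IsBlochPoly n f →
      IsBlochPoly n (f ∘ φ) ∧ blochNormPoly n (f ∘ φ) = blochNormPoly n f) :
    (∀ c : Fin n → ℂ, (∀ z ∈ polydisk n, ∑ j, c j * φ z j = 0) →
      ∀ j, c j = 0) ∧
    φ 0 = 0 ∧
    ∀ j : Fin n, blochSemiPoly n (fun z => φ z j) = 1 := by
  have h0p := zero_mem_polydisk n
  -- differentiability of the components
  have hψdOn : ∀ j : Fin n, DifferentiableOn ℂ (fun w => φ w j) (polydisk n) := by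
    intro j w hw
    exact (differentiableAt_pi.1 ((hφ w hw).differentiableAt
      ((polydisk_open n).mem_nhds hw)) j).differentiableWithinAt
  have hψlt : ∀ j : Fin n, ∀ w ∈ polydisk n, ‖φ w j‖ < 1 := fun j w hw => hmap hw j
  -- Step A : projections give ‖φ 0 j‖ + β_{φ_j} = 1
  have hproj : ∀ j : Fin n, ‖φ 0 j‖ + blochSemiPoly n (fun z => φ z j) = 1 := by
    intro j
    set p : (Fin n → ℂ) → ℂ := fun w => w j with hp
    have hfq : ∀ z : Fin n → ℂ, ∀ u : Fin n → ℂ, fderiv ℂ p z u = 1 * u j := by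
      intro z u
      rw [(hasFDerivAt_proj j z).fderiv]
      simp
    have hQ : ∀ z ∈ polydisk n, Qpoly n p z = 1 - ‖z j‖ ^ 2 := by
      intro z hz
      have := Qpoly_eq_proj_like hz (hfq z)
      simpa using this
    have hQle : ∀ z ∈ polydisk n, Qpoly n p z ≤ 1 := by
      intro z hz
      rw [hQ z hz]
      nlinarith [norm_nonneg (z j), sq_nonneg ‖z j‖]
    have hsemi : blochSemiPoly n p = 1 := by
      apply blochSemi_eq_of_bound zero_le_one hQle
      exact ⟨0, h0p, by rw [hQ 0 h0p]; simp⟩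
    have hbloch : IsBlochPoly n p :=
      ⟨fun z _ => ((hasFDerivAt_proj j z).differentiableAt).differentiableWithinAt,
        blochValues_bddAbove_of_bound hQle⟩
    obtain ⟨-, heq⟩ := hiso p hbloch
    have hcomp : p ∘ φ = fun z => φ z j := rfl
    rw [hcomp, blochNormPoly, blochNormPoly, hsemi] at heq
    simpa [hp] using heq
  -- Step B : φ 0 = 0 componentwise via Möbius test functions
  have hzero : ∀ j : Fin n, φ 0 j = 0 := by
    intro j
    set a := φ 0 j with ha
    have ha1 : ‖a‖ < 1 := hmap h0p j
    have hda : 0 < 1 - ‖a‖ ^ 2 := by nlinarith [norm_nonneg a]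
    set g : (Fin n → ℂ) → ℂ := fun w => mob a (w j) with hg
    -- coefficient bound
    have hnum : ∀ w : ℂ, ‖(starRingEnd ℂ) a * a - 1‖ = 1 - ‖a‖ ^ 2 := by
      intro w
      rw [← norm_neg, neg_sub, norm_one_sub_conj_mul_self ha1]
    have hcoeff : ∀ w : ℂ, ‖w‖ < 1 →
        ‖((starRingEnd ℂ) a * a - 1) / (1 - (starRingEnd ℂ) a * w) ^ 2‖ * (1 - ‖w‖ ^ 2) ≤ 1 := by
      intro w hw
      have hdenne := mob_denom_ne ha1 hw
      have hdpos : 0 < ‖1 - (starRingEnd ℂ) a * w‖ := norm_pos_iff.2 hdenne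
      have hid := mob_identity a w
      rw [norm_div, norm_pow, hnum w]
      rw [div_mul_eq_mul_div, div_le_one (by positivity)]
      nlinarith [norm_nonneg (a - w)]
    have hgder : ∀ z ∈ polydisk n, ∀ u : Fin n → ℂ,
        fderiv ℂ g z u
          = (((starRingEnd ℂ) a * a - 1) / (1 - (starRingEnd ℂ) a * z j) ^ 2) * u j := by
      intro z hz u
      have hF : HasFDerivAt g
          ((((starRingEnd ℂ) a * a - 1) / (1 - (starRingEnd ℂ) a * z j) ^ 2) •
            (ContinuousLinearMap.proj j : ((k : Fin n) → ℂ) →L[ℂ] ℂ)) z :=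
        by
          have h := (mob_hasDerivAt a (mob_denom_ne ha1 (hz j))).comp_hasFDerivAt z
            (hasFDerivAt_apply (𝕜 := ℂ) j z)
          convert h using 1
          all_goals try rfl
      rw [hF.fderiv]
      simp
    have hQle : ∀ z ∈ polydisk n, Qpoly n g z ≤ 1 := by
      intro z hz
      rw [Qpoly_eq_proj_like hz (hgder z hz)]
      exact hcoeff (z j) (hz j)
    have hsingle : Pi.single j a ∈ polydisk n := by
      intro k
      rcases eq_or_ne k j with rfl | hk
      · simpa [Pi.single_eq_same] using ha1
      · simp [Pi.single_eq_of_ne hk]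
    have hQone : Qpoly n g (Pi.single j a) = 1 := by
      rw [Qpoly_eq_proj_like hsingle (hgder _ hsingle)]
      rw [Pi.single_eq_same, norm_div, norm_pow, hnum a, norm_one_sub_conj_mul_self ha1]
      rw [pow_two (1 - ‖a‖ ^ 2), div_mul_cancel_left₀ hda.ne', inv_mul_cancel₀ hda.ne']
    have hsemi : blochSemiPoly n g = 1 :=
      blochSemi_eq_of_bound zero_le_one hQle ⟨Pi.single j a, hsingle, hQone⟩
    have hbloch : IsBlochPoly n g := by
      refine ⟨fun z hz => ?_, blochValues_bddAbove_of_bound hQle⟩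
      exact (((mob_hasDerivAt a (mob_denom_ne ha1 (hz j))).comp_hasFDerivAt z
        (hasFDerivAt_proj j z)).differentiableAt).differentiableWithinAt
    obtain ⟨-, heq⟩ := hiso g hbloch
    have hg0 : g 0 = a := by simp [hg, mob_zero]
    have hnormg : blochNormPoly n g = ‖a‖ + 1 := by
      rw [blochNormPoly, hg0, hsemi]
    -- bound on the composition
    have hgφ0 : (g ∘ φ) 0 = 0 := by
      simp [hg, Function.comp, ← ha, mob_self]
    have hQcomp : ∀ z ∈ polydisk n, Qpoly n (g ∘ φ) z ≤ 1 := by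
      intro z hz
      apply Qpoly_le_of_bound hz zero_le_one
      intro u hu
      have hw0 : ‖φ z j‖ < 1 := hmap hz j
      have hψz : DifferentiableAt ℂ (fun w => φ w j) z :=
        differentiableAt_pi.1 ((hφ z hz).differentiableAt ((polydisk_open n).mem_nhds hz)) j
      have hchain : HasFDerivAt (g ∘ φ)
          ((((starRingEnd ℂ) a * a - 1) / (1 - (starRingEnd ℂ) a * φ z j) ^ 2) •
            fderiv ℂ (fun w => φ w j) z) z :=
        (mob_hasDerivAt a (mob_denom_ne ha1 hw0)).comp_hasFDerivAt z hψz.hasFDerivAt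
      rw [hchain.fderiv]
      rw [ContinuousLinearMap.smul_apply, norm_smul]
      have hsp := schwarz_pick_polydisk (hψdOn j) (hψlt j) hz hu
      calc ‖((starRingEnd ℂ) a * a - 1) / (1 - (starRingEnd ℂ) a * φ z j) ^ 2‖ *
            ‖fderiv ℂ (fun w => φ w j) z u‖
          ≤ ‖((starRingEnd ℂ) a * a - 1) / (1 - (starRingEnd ℂ) a * φ z j) ^ 2‖ *
            ((1 - ‖φ z j‖ ^ 2) * Real.sqrt (polyH n z u)) :=
            mul_le_mul_of_nonneg_left hsp (norm_nonneg _)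
        _ = ‖((starRingEnd ℂ) a * a - 1) / (1 - (starRingEnd ℂ) a * φ z j) ^ 2‖ *
            (1 - ‖φ z j‖ ^ 2) * Real.sqrt (polyH n z u) := by ring
        _ ≤ 1 * Real.sqrt (polyH n z u) :=
            mul_le_mul_of_nonneg_right (hcoeff (φ z j) hw0) (Real.sqrt_nonneg _)
    have hsemicomp : blochSemiPoly n (g ∘ φ) ≤ 1 := blochSemi_le_of_bound zero_le_one hQcomp
    have : ‖a‖ + 1 ≤ 1 := by
      rw [← heq, blochNormPoly, hgφ0, norm_zero, zero_add] at hnormg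
      rw [← hnormg]
      exact hsemicomp
    have : ‖a‖ ≤ 0 := by linarith
    exact norm_le_zero_iff.1 this
  -- Step C : linear independence
  have hlin : ∀ c : Fin n → ℂ, (∀ z ∈ polydisk n, ∑ j, c j * φ z j = 0) → ∀ j, c j = 0 := by
    intro c hc j0
    by_contra hc0
    set M := Real.sqrt (∑ k, ‖c k‖ ^ 2) with hM
    have hMpos : 0 < M := by
      apply Real.sqrt_pos.2
      apply Finset.sum_pos' (fun k _ => sq_nonneg _)
      exact ⟨j0, Finset.mem_univ _, pow_pos (norm_pos_iff.2 hc0) 2⟩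
    set L : ((k : Fin n) → ℂ) →L[ℂ] ℂ :=
      ∑ k, c k • (ContinuousLinearMap.proj k : ((k : Fin n) → ℂ) →L[ℂ] ℂ) with hL
    set f : (Fin n → ℂ) → ℂ := fun w => ∑ k, c k * w k with hf
    have hLf : (⇑L : (Fin n → ℂ) → ℂ) = f := by
      funext w
      simp [hL, hf, ContinuousLinearMap.sum_apply]
    have hfder : ∀ z : Fin n → ℂ, HasFDerivAt f L z := fun z => hLf ▸ L.hasFDerivAt
    have hfd : ∀ z : Fin n → ℂ, ∀ u : Fin n → ℂ, fderiv ℂ f z u = ∑ k, c k * u k := by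
      intro z u
      rw [(hfder z).fderiv]
      exact congrFun hLf u
    have hub : ∀ z ∈ polydisk n, ∀ u : Fin n → ℂ, u ≠ 0 →
        ‖fderiv ℂ f z u‖ ≤ M * Real.sqrt (polyH n z u) := by
      intro z hz u hu
      rw [hfd]
      have step1 : ‖∑ k, c k * u k‖ ≤
          ∑ k, (‖c k‖ * (1 - ‖z k‖ ^ 2)) * (‖u k‖ / (1 - ‖z k‖ ^ 2)) := by
        refine (norm_sum_le _ _).trans (le_of_eq (Finset.sum_congr rfl fun k _ => ?_))
        have h1 := one_sub_sq_pos hz k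
        rw [norm_mul, mul_assoc, mul_comm (1 - ‖z k‖ ^ 2), div_mul_cancel₀ _ h1.ne']
      have cauchy := Finset.sum_mul_sq_le_sq_mul_sq Finset.univ
        (fun k => ‖c k‖ * (1 - ‖z k‖ ^ 2)) (fun k => ‖u k‖ / (1 - ‖z k‖ ^ 2))
      have hA : ∑ k, (‖c k‖ * (1 - ‖z k‖ ^ 2)) ^ 2 ≤ ∑ k, ‖c k‖ ^ 2 := by
        apply Finset.sum_le_sum
        intro k _
        have h1 := one_sub_sq_pos hz k
        have h2 : 1 - ‖z k‖ ^ 2 ≤ 1 := by nlinarith [sq_nonneg ‖z k‖]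
        rw [mul_pow]
        have h3 : (1 - ‖z k‖ ^ 2) ^ 2 ≤ 1 := by nlinarith
        nlinarith [sq_nonneg ‖c k‖]
      have hB : ∑ k, (‖u k‖ / (1 - ‖z k‖ ^ 2)) ^ 2 = polyH n z u := by
        rw [polyH]
        exact Finset.sum_congr rfl fun k _ => by rw [div_pow]
      have hsum_nonneg : (0:ℝ) ≤ ∑ k, (‖c k‖ * (1 - ‖z k‖ ^ 2)) * (‖u k‖ / (1 - ‖z k‖ ^ 2)) := by
        apply Finset.sum_nonneg
        intro k _
        have h1 := one_sub_sq_pos hz k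
        positivity
      have key : (∑ k, (‖c k‖ * (1 - ‖z k‖ ^ 2)) * (‖u k‖ / (1 - ‖z k‖ ^ 2))) ^ 2
          ≤ M ^ 2 * polyH n z u := by
        rw [hM, Real.sq_sqrt (Finset.sum_nonneg fun k _ => sq_nonneg _)]
        calc (∑ k, (‖c k‖ * (1 - ‖z k‖ ^ 2)) * (‖u k‖ / (1 - ‖z k‖ ^ 2))) ^ 2
            ≤ (∑ k, (‖c k‖ * (1 - ‖z k‖ ^ 2)) ^ 2) * (∑ k, (‖u k‖ / (1 - ‖z k‖ ^ 2)) ^ 2) :=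
              cauchy
          _ ≤ (∑ k, ‖c k‖ ^ 2) * polyH n z u := by
              rw [hB]
              exact mul_le_mul_of_nonneg_right hA (polyH_nonneg n z u)
      have hfin : ∑ k, (‖c k‖ * (1 - ‖z k‖ ^ 2)) * (‖u k‖ / (1 - ‖z k‖ ^ 2))
          ≤ M * Real.sqrt (polyH n z u) := by
        have h2 : Real.sqrt ((∑ k, (‖c k‖ * (1 - ‖z k‖ ^ 2)) * (‖u k‖ / (1 - ‖z k‖ ^ 2))) ^ 2)
            ≤ Real.sqrt (M ^ 2 * polyH n z u) := Real.sqrt_le_sqrt key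
        rwa [Real.sqrt_sq hsum_nonneg, Real.sqrt_mul (sq_nonneg M),
          Real.sqrt_sq hMpos.le] at h2
      exact step1.trans hfin
    have hQ0 : Qpoly n f 0 = M := by
      apply Qpoly_eq_of_bound h0p hMpos.le (hub 0 h0p)
      refine ⟨fun k => (starRingEnd ℂ) (c k), ?_, ?_⟩
      · intro hcon
        have := congrFun hcon j0
        simp at this
        exact hc0 this
      · rw [hfd]
        have h1 : ∑ k, c k * (starRingEnd ℂ) (c k) = ((∑ k, ‖c k‖ ^ 2 : ℝ) : ℂ) := by
          push_cast
          refine Finset.sum_congr rfl fun k _ => ?_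
          rw [mul_conj]
          norm_cast
          rw [normSq_eq_norm_sq]
        have h2 : polyH n 0 (fun k => (starRingEnd ℂ) (c k)) = ∑ k, ‖c k‖ ^ 2 := by
          rw [polyH]
          refine Finset.sum_congr rfl fun k _ => ?_
          rw [Pi.zero_apply, norm_zero, RCLike.norm_conj]
          norm_num
        rw [h1, h2, Complex.norm_real, Real.norm_eq_abs,
          _root_.abs_of_nonneg (Finset.sum_nonneg fun k _ => sq_nonneg _), hM,
          Real.mul_self_sqrt (Finset.sum_nonneg fun k _ => sq_nonneg _)]
    have hQleM : ∀ z ∈ polydisk n, Qpoly n f z ≤ M := fun z hz =>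
      Qpoly_le_of_bound hz hMpos.le (hub z hz)
    have hsemiF : blochSemiPoly n f = M :=
      blochSemi_eq_of_bound hMpos.le hQleM ⟨0, h0p, hQ0⟩
    have hf0 : f 0 = 0 := by
      rw [hf]
      simp only [Pi.zero_apply, mul_zero, Finset.sum_const_zero]
    have hblochf : IsBlochPoly n f :=
      ⟨fun z _ => (hfder z).differentiableAt.differentiableWithinAt,
        blochValues_bddAbove_of_bound hQleM⟩
    obtain ⟨-, heq⟩ := hiso f hblochf
    have hcomp0 : (f ∘ φ) 0 = 0 := hc 0 h0p
    have hsemicomp : blochSemiPoly n (f ∘ φ) ≤ 0 := by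
      apply Real.sSup_le _ le_rfl
      rintro r ⟨z, hz, rfl⟩
      apply Real.sSup_le _ le_rfl
      rintro r ⟨u, hu, rfl⟩
      have hEq : f ∘ φ =ᶠ[nhds z] fun _ => (0 : ℂ) := by
        filter_upwards [(polydisk_open n).mem_nhds hz] with w hw
        exact hc w hw
      rw [hEq.fderiv_eq, fderiv_const_apply]
      simp
    have hfin : blochNormPoly n (f ∘ φ) ≤ 0 := by
      rw [blochNormPoly, hcomp0, norm_zero, zero_add]
      exact hsemicomp
    rw [heq, blochNormPoly, hf0, norm_zero, zero_add, hsemiF] at hfin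
    linarith
  refine ⟨hlin, funext hzero, fun j => ?_⟩
  have hj := hproj j
  rw [hzero j, norm_zero, zero_add] at hj
  exact hj
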